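/- Conversely, let α > −1, n + α + β > 0, n ≥ 4. If the zeros of φ_n^{(α,β)} and φ_{n−1}^{(α,β)} are negative and interlace non-strictly, then φ_n^{(α,β−1)} has only real zeros. -/

import Mathlib

open Polynomial

/-- The Jacobi polynomial `P_n^{(α,β)}` as a real polynomial in `x`. -/
noncomputable def jacobiP (α β : ℝ) (n : ℕ) : Polynomial ℝ :=
  C ((ascPochhammer ℝ n).eval (α + 1) / (n.factorial : ℝ)) *
    ∑ k ∈ Finset.range (n + 1),
      C ((ascPochhammer ℝ k).eval (-(n : ℝ)) * (ascPochhammer ℝ k).eval ((n : ℝ) + α + β + 1) /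
          ((k.factorial : ℝ) * (ascPochhammer ℝ k).eval (α + 1))) *
        (C (1 / 2 : ℝ) * (1 - X)) ^ k

/-- `φ_n^{(α,β)}(μ) = Σ_{k=0}^{[n/2]} (d/dx)^{2k} P_n^{(α,β)}(x)|_{x=1} · μ^k`. -/
noncomputable def phi (α β : ℝ) (n : ℕ) : Polynomial ℝ :=
  ∑ k ∈ Finset.range (n / 2 + 1),
    C ((Polynomial.derivative^[2 * k] (jacobiP α β n)).eval 1) * X ^ k

/-- All complex zeros of `p` are real (i.e. `p` splits over `ℝ`). -/
def RealRooted (p : Polynomial ℝ) : Prop := (p.roots.card : ℕ) = p.natDegree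

/-- All zeros of `p` are real and simple. -/
def AllRealSimple (p : Polynomial ℝ) : Prop := RealRooted p ∧ p.roots.Nodup

/-- Zeros of `g` and `h` interlace strictly. -/
def StrictlyInterlacing (g h : Polynomial ℝ) : Prop :=
  AllRealSimple g ∧ AllRealSimple h ∧
  (∀ x : ℝ, ¬(g.IsRoot x ∧ h.IsRoot x)) ∧
  (∀ x y : ℝ, g.IsRoot x → g.IsRoot y → x < y →
      (∀ t : ℝ, g.IsRoot t → ¬(x < t ∧ t < y)) →
      ∃! z : ℝ, h.IsRoot z ∧ x < z ∧ z < y) ∧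
  (∀ x y : ℝ, h.IsRoot x → h.IsRoot y → x < y →
      (∀ t : ℝ, h.IsRoot t → ¬(x < t ∧ t < y)) →
      ∃! z : ℝ, g.IsRoot z ∧ x < z ∧ z < y)

/-- `(g,h)` is a real pair: every real combination has only real zeros.
This is equivalent to non-strict interlacing of the zeros. -/
def RealPair (g h : Polynomial ℝ) : Prop :=
  ∀ a b : ℝ, RealRooted (C a * g + C b * h)

/-- The zero of `p` closest to the origin, when all zeros of `p` are negative. -/
noncomputable def maxRoot (p : Polynomial ℝ) : ℝ := sSup {x : ℝ | p.IsRoot x}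

/-- `f` is Hurwitz stable: all complex zeros lie in the open left half-plane. -/
def HurwitzStable (f : Polynomial ℝ) : Prop :=
  ∀ z : ℂ, Polynomial.aeval z f = 0 → z.re < 0

/- ### Auxiliary lemmas -/

lemma asc_eval_succ (k : ℕ) (x : ℝ) :
    x * (ascPochhammer ℝ k).eval (x + 1) = (ascPochhammer ℝ k).eval x * (x + k) := by
  have e1 : (ascPochhammer ℝ (k+1)).eval x = x * (ascPochhammer ℝ k).eval (x+1) := by
    rw [ascPochhammer_succ_left]; simp [eval_comp]
  have e2 : (ascPochhammer ℝ (k+1)).eval x = (ascPochhammer ℝ k).eval x * (x + k) := by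
    rw [ascPochhammer_succ_right]; simp
  rw [← e1, e2]

lemma scalar_abs (M kk α β P Pk a b q q1 K F : ℝ)
    (hPk : Pk ≠ 0) (hK : K ≠ 0) (hF : F ≠ 0) (hM : M ≠ 0)
    (hq1 : (M+α+β) * q1 = q * (M+α+β+kk))
    (hneg : -M*b = a*(-M+kk)) :
    (2*M+α+β) * (P*(α+M) / (M*F)) * (a*q/(K*Pk))
      = (M+α+β) * (P*(α+M)/(M*F)) * (a*q1/(K*Pk)) + (M+α) * (P/F) * (b*q/(K*Pk)) := by
  have hb : b = a*(M-kk)/M := by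
    rw [eq_div_iff hM]; linear_combination -hneg
  subst hb
  linear_combination (-((α+M)*a*P/(M*F*K*Pk))) * hq1

lemma scalar_key (k m : ℕ) (α β : ℝ) (hα : -1 < α) :
    (2*((m:ℝ)+1)+α+β) * ((ascPochhammer ℝ (m+1)).eval (α+1) / ((m+1).factorial : ℝ)) *
      ((ascPochhammer ℝ k).eval (-((m:ℝ)+1)) * (ascPochhammer ℝ k).eval ((m:ℝ)+1+α+β) /
        ((k.factorial : ℝ) * (ascPochhammer ℝ k).eval (α+1)))
  = (((m:ℝ)+1)+α+β) * ((ascPochhammer ℝ (m+1)).eval (α+1) / ((m+1).factorial : ℝ)) *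
      ((ascPochhammer ℝ k).eval (-((m:ℝ)+1)) * (ascPochhammer ℝ k).eval ((m:ℝ)+1+α+β+1) /
        ((k.factorial : ℝ) * (ascPochhammer ℝ k).eval (α+1)))
  + (((m:ℝ)+1)+α) * ((ascPochhammer ℝ m).eval (α+1) / (m.factorial : ℝ)) *
      ((ascPochhammer ℝ k).eval (-(m:ℝ)) * (ascPochhammer ℝ k).eval ((m:ℝ)+1+α+β) /
        ((k.factorial : ℝ) * (ascPochhammer ℝ k).eval (α+1))) := by
  have hα1 : (0:ℝ) < α + 1 := by linarith
  have hpk : (ascPochhammer ℝ k).eval (α+1) ≠ 0 := (ascPochhammer_pos k _ hα1).ne'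
  have hkf : ((k.factorial : ℝ)) ≠ 0 := Nat.cast_ne_zero.mpr k.factorial_ne_zero
  have hmf : ((m.factorial : ℝ)) ≠ 0 := Nat.cast_ne_zero.mpr m.factorial_ne_zero
  have hM : ((m:ℝ)+1) ≠ 0 := by positivity
  have hpA : (ascPochhammer ℝ (m+1)).eval (α+1) = (ascPochhammer ℝ m).eval (α+1) * (α+1+m) := by
    rw [ascPochhammer_succ_right]; simp
  have hfac : (((m+1).factorial : ℝ)) = ((m:ℝ)+1) * (m.factorial : ℝ) := by
    rw [Nat.factorial_succ]; push_cast; ring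
  have hq1 : ((m:ℝ)+1+α+β) * (ascPochhammer ℝ k).eval ((m:ℝ)+1+α+β+1)
      = (ascPochhammer ℝ k).eval ((m:ℝ)+1+α+β) * (((m:ℝ)+1+α+β)+k) := asc_eval_succ k _
  have hneg := asc_eval_succ k (-((m:ℝ)+1))
  rw [show -((m:ℝ)+1)+1 = -(m:ℝ) by ring] at hneg
  rw [hpA, hfac]
  linear_combination scalar_abs ((m:ℝ)+1) k α β ((ascPochhammer ℝ m).eval (α+1))
    ((ascPochhammer ℝ k).eval (α+1)) ((ascPochhammer ℝ k).eval (-((m:ℝ)+1)))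
    ((ascPochhammer ℝ k).eval (-(m:ℝ))) ((ascPochhammer ℝ k).eval ((m:ℝ)+1+α+β))
    ((ascPochhammer ℝ k).eval ((m:ℝ)+1+α+β+1)) (k.factorial : ℝ) (m.factorial : ℝ)
    hpk hkf hmf hM (by linear_combination hq1) (by linear_combination hneg)

lemma Cmul_jacobi (c α β : ℝ) (n : ℕ) :
    C c * jacobiP α β n = ∑ k ∈ Finset.range (n+1),
      C (c * ((ascPochhammer ℝ n).eval (α + 1) / (n.factorial : ℝ)) *
        ((ascPochhammer ℝ k).eval (-(n:ℝ)) * (ascPochhammer ℝ k).eval ((n:ℝ)+α+β+1) /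
          ((k.factorial:ℝ) * (ascPochhammer ℝ k).eval (α+1)))) *
      (C (1/2:ℝ) * (1 - X))^k := by
  unfold jacobiP
  rw [← mul_assoc, ← C_mul, Finset.mul_sum]
  refine Finset.sum_congr rfl fun k hk => by rw [← mul_assoc, ← C_mul]

lemma jacobi_rec (α β : ℝ) (m : ℕ) (hα : -1 < α) :
    C (2*((m:ℝ)+1)+α+β) * jacobiP α (β-1) (m+1)
      = C (((m:ℝ)+1)+α+β) * jacobiP α β (m+1) + C (((m:ℝ)+1)+α) * jacobiP α β m := by
  rw [Cmul_jacobi, Cmul_jacobi, Cmul_jacobi]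
  have hext : (∑ k ∈ Finset.range (m+1),
      C ((((m:ℝ)+1)+α) * ((ascPochhammer ℝ m).eval (α + 1) / (m.factorial : ℝ)) *
        ((ascPochhammer ℝ k).eval (-(m:ℝ)) * (ascPochhammer ℝ k).eval ((m:ℝ)+α+β+1) /
          ((k.factorial:ℝ) * (ascPochhammer ℝ k).eval (α+1)))) *
      (C (1/2:ℝ) * (1 - X))^k)
    = ∑ k ∈ Finset.range (m+1+1),
      C ((((m:ℝ)+1)+α) * ((ascPochhammer ℝ m).eval (α + 1) / (m.factorial : ℝ)) *
        ((ascPochhammer ℝ k).eval (-(m:ℝ)) * (ascPochhammer ℝ k).eval ((m:ℝ)+α+β+1) /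
          ((k.factorial:ℝ) * (ascPochhammer ℝ k).eval (α+1)))) *
      (C (1/2:ℝ) * (1 - X))^k := by
    have hz : (ascPochhammer ℝ (m+1)).eval (-(m:ℝ)) = 0 := by
      rw [ascPochhammer_succ_right]; simp
    conv_rhs => rw [Finset.sum_range_succ]
    rw [hz]
    simp
  rw [hext, ← Finset.sum_add_distrib]
  refine Finset.sum_congr rfl fun k hk => ?_
  rw [← add_mul, ← C_add]
  congr 1
  rw [C_inj]
  push_cast
  have := scalar_key k m α β hα
  rw [show (m:ℝ)+1+α+(β-1)+1 = (m:ℝ)+1+α+β by ring,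
      show (m:ℝ)+α+β+1 = (m:ℝ)+1+α+β by ring]
  linear_combination this

lemma natDegree_jacobiP_le (α β : ℝ) (n : ℕ) : (jacobiP α β n).natDegree ≤ n := by
  unfold jacobiP
  refine (natDegree_C_mul_le _ _).trans ?_
  refine natDegree_sum_le_of_forall_le _ _ fun k hk => ?_
  refine (natDegree_C_mul_le _ _).trans ?_
  refine (natDegree_pow_le).trans ?_
  have h1 : (C (1/2:ℝ) * (1 - X)).natDegree ≤ 1 := by
    refine (natDegree_C_mul_le _ _).trans ?_
    rw [show (1 - X : ℝ[X]) = -(X - C 1) by simp, natDegree_neg, natDegree_X_sub_C]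
  calc k * (C (1/2:ℝ) * (1 - X)).natDegree ≤ k * 1 := Nat.mul_le_mul_left _ h1
    _ = k := Nat.mul_one k
    _ ≤ n := Nat.lt_succ_iff.mp (Finset.mem_range.mp hk)

lemma iter_deriv_add (p q : ℝ[X]) (k : ℕ) :
    derivative^[k] (p + q) = derivative^[k] p + derivative^[k] q := by
  induction k with
  | zero => simp
  | succ n ih => rw [Function.iterate_succ_apply', Function.iterate_succ_apply',
      Function.iterate_succ_apply', ih, derivative_add]

lemma Cmul_phiSum (c : ℝ) (p : ℝ[X]) (N : ℕ) :
    C c * ∑ k ∈ Finset.range N, C ((derivative^[2*k] p).eval 1) * X^k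
      = ∑ k ∈ Finset.range N, C ((derivative^[2*k] (C c * p)).eval 1) * X^k := by
  rw [Finset.mul_sum]
  refine Finset.sum_congr rfl fun k _ => ?_
  rw [Polynomial.iterate_derivative_C_mul, eval_mul, eval_C, ← mul_assoc, ← C_mul]

lemma phi_rec (α β : ℝ) (m : ℕ) (hα : -1 < α) :
    C (2*((m:ℝ)+1)+α+β) * phi α (β-1) (m+1)
      = C (((m:ℝ)+1)+α+β) * phi α β (m+1) + C (((m:ℝ)+1)+α) * phi α β m := by
  have key := jacobi_rec α β m hα
  unfold phi
  have hsub : Finset.range (m/2+1) ⊆ Finset.range ((m+1)/2+1) :=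
    Finset.range_subset_range.mpr (by omega)
  rw [show (∑ k ∈ Finset.range (m/2+1),
        C ((derivative^[2*k] (jacobiP α β m)).eval 1) * X^k)
      = ∑ k ∈ Finset.range ((m+1)/2+1),
        C ((derivative^[2*k] (jacobiP α β m)).eval 1) * X^k from
    Finset.sum_subset hsub (fun k hk hk' => by
      have hmem : ¬ k < m/2 + 1 := fun h => hk' (Finset.mem_range.mpr h)
      have h2k : (jacobiP α β m).natDegree < 2*k := by
        have := natDegree_jacobiP_le α β m
        omega
      rw [Polynomial.iterate_derivative_eq_zero h2k]; simp)]
  rw [Cmul_phiSum, Cmul_phiSum, Cmul_phiSum, ← Finset.sum_add_distrib]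
  refine Finset.sum_congr rfl fun k _ => ?_
  rw [← add_mul, ← C_add, ← eval_add, ← iter_deriv_add, ← key]

/-- Conversely: if the zeros of `φ_n^{(α,β)}` and `φ_{n−1}^{(α,β)}` are negative and
interlace non-strictly (they form a real pair), then `φ_n^{(α,β−1)}` has only real zeros. -/
theorem shifted_real_rooted_of_phi_interlacing (α β : ℝ) (n : ℕ) (hn : 4 ≤ n)
    (hα : -1 < α) (hnab : 0 < (n : ℝ) + α + β)
    (h1 : RealRooted (phi α β n)) (h2 : RealRooted (phi α β (n - 1)))
    (hneg1 : ∀ x ∈ (phi α β n).roots, x < 0)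
    (hneg2 : ∀ x ∈ (phi α β (n - 1)).roots, x < 0)
    (hpair : RealPair (phi α β n) (phi α β (n - 1))) :
    RealRooted (phi α (β - 1) n) := by
  obtain ⟨m, rfl⟩ : ∃ m, n = m + 1 := ⟨n - 1, by omega⟩
  have hrec := phi_rec α β m hα
  have h := hpair ((((m:ℕ):ℝ)+1)+α+β) ((((m:ℕ):ℝ)+1)+α)
  rw [show m + 1 - 1 = m from rfl] at h
  rw [← hrec] at h
  have hc : (2*((m:ℝ)+1)+α+β) ≠ 0 := by
    push_cast at hnab
    have : (0:ℝ) < (m:ℝ)+1 := by positivity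
    linarith
  unfold RealRooted at h ⊢
  rwa [roots_C_mul _ hc, natDegree_C_mul hc] at h
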